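/- Let f, g : [0,1] → ℝ be continuous functions with f(x) ≠ 0 and g(x) ≠ 0 for all x ∈ [0,1], and suppose dim_B̄ G(f) ≠ dim_B̄ G(g). Then dim_B̄ G(f·g) = max{dim_B̄ G(f), dim_B̄ G(g)}. -/

import Mathlib

open Set Filter Metric Topology ENNReal

noncomputable def coverNum {α : Type*} [PseudoMetricSpace α] (F : Set α) (δ : ℝ) : ℕ :=
  sInf {n : ℕ | ∃ t : Finset α, t.card = n ∧ F ⊆ ⋃ p ∈ t, Metric.closedBall p δ}

noncomputable def upperBoxDim {α : Type*} [PseudoMetricSpace α] (F : Set α) : ℝ :=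
  Filter.limsup (fun δ : ℝ => Real.log (coverNum F δ) / -Real.log δ)
    (nhdsWithin (0 : ℝ) (Set.Ioi 0))

noncomputable def lowerBoxDim {α : Type*} [PseudoMetricSpace α] (F : Set α) : ℝ :=
  Filter.liminf (fun δ : ℝ => Real.log (coverNum F δ) / -Real.log δ)
    (nhdsWithin (0 : ℝ) (Set.Ioi 0))

/-- Graph of `f` over the set `X`. -/
def fnGraphOn (f : ℝ → ℝ) (X : Set ℝ) : Set (ℝ × ℝ) := (fun x => (x, f x)) '' X

/-- Graph of `f` over `[0,1]`. -/
def G (f : ℝ → ℝ) : Set (ℝ × ℝ) := fnGraphOn f (Set.Icc 0 1)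


-- ===== auxiliary development =====

section Basic
variable {α : Type*} [PseudoMetricSpace α]

lemma coverSet_nonempty {F : Set α} (hF : IsCompact F) {δ : ℝ} (hδ : 0 < δ) :
    {n : ℕ | ∃ t : Finset α, t.card = n ∧ F ⊆ ⋃ p ∈ t, closedBall p δ}.Nonempty := by
  obtain ⟨s, hsfin, hs⟩ := (totallyBounded_iff.mp hF.totallyBounded) δ hδ
  refine ⟨hsfin.toFinset.card, hsfin.toFinset, rfl, hs.trans ?_⟩
  refine iUnion₂_mono' fun p hp => ⟨p, by simpa using hp, ball_subset_closedBall⟩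

lemma coverNum_le {F : Set α} {δ : ℝ} {t : Finset α} (h : F ⊆ ⋃ p ∈ t, closedBall p δ) :
    coverNum F δ ≤ t.card := Nat.sInf_le ⟨t, rfl, h⟩

lemma exists_coverNum_cover {F : Set α} (hF : IsCompact F) {δ : ℝ} (hδ : 0 < δ) :
    ∃ t : Finset α, t.card = coverNum F δ ∧ F ⊆ ⋃ p ∈ t, closedBall p δ :=
  Nat.sInf_mem (coverSet_nonempty hF hδ)

lemma one_le_coverNum {F : Set α} (hF : IsCompact F) (hne : F.Nonempty) {δ : ℝ} (hδ : 0 < δ) :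
    1 ≤ coverNum F δ := by
  obtain ⟨t, ht, hcov⟩ := exists_coverNum_cover hF hδ
  rcases hne with ⟨x, hx⟩
  have := hcov hx
  simp only [mem_iUnion] at this
  obtain ⟨p, hp, -⟩ := this
  have : t.Nonempty := ⟨p, hp⟩
  have := Finset.card_pos.mpr this
  omega
  
end Basic

lemma upperBoxDim_le_max_of_cover {α : Type*} [PseudoMetricSpace α]
    (F' F₁ F₂ : Set α) (C c B : ℝ) (hC : 1 ≤ C) (hc : 1 ≤ c)
    (hB : ∀ᶠ δ in 𝓝[>] (0:ℝ), Real.log (coverNum F₁ δ) / -Real.log δ ≤ B ∧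
          Real.log (coverNum F₂ δ) / -Real.log δ ≤ B)
    (hpos : ∀ᶠ δ in 𝓝[>] (0:ℝ), 1 ≤ coverNum F₁ δ ∧ 1 ≤ coverNum F₂ δ)
    (h1 : ∀ᶠ δ in 𝓝[>] (0:ℝ),
      (coverNum F' δ : ℝ) ≤ C * ((coverNum F₁ (δ/c) : ℝ) + (coverNum F₂ (δ/c) : ℝ))) :
    upperBoxDim F' ≤ max (upperBoxDim F₁) (upperBoxDim F₂) := by
  set l : Filter ℝ := 𝓝[>] (0:ℝ) with hl
  set v₁ : ℝ → ℝ := fun δ => Real.log (coverNum F₁ δ) / -Real.log δ with hv₁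
  set v₂ : ℝ → ℝ := fun δ => Real.log (coverNum F₂ δ) / -Real.log δ with hv₂
  set u : ℝ → ℝ := fun δ => Real.log (coverNum F' δ) / -Real.log δ with hu
  set L : ℝ := max (limsup v₁ l) (limsup v₂ l) with hL
  have hc0 : (0:ℝ) < c := lt_of_lt_of_le one_pos hc
  have E1 : ∀ᶠ δ in l, (0:ℝ) < δ := self_mem_nhdsWithin
  have E2 : ∀ᶠ δ in l, δ < (1:ℝ) :=
    Filter.Eventually.filter_mono nhdsWithin_le_nhds (eventually_lt_nhds one_pos)
  have htend : Tendsto (fun δ : ℝ => δ / c) l l := by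
    rw [tendsto_nhdsWithin_iff]
    constructor
    · have : Tendsto (fun δ : ℝ => δ / c) (𝓝 0) (𝓝 (0 / c)) := tendsto_id.div_const c
      simpa using this.mono_left nhdsWithin_le_nhds
    · exact E1.mono fun δ hδ => div_pos hδ hc0
  have hbdd₁ : IsBoundedUnder (· ≤ ·) l v₁ := ⟨B, eventually_map.mpr (hB.mono fun δ h => h.1)⟩
  have hbdd₂ : IsBoundedUnder (· ≤ ·) l v₂ := ⟨B, eventually_map.mpr (hB.mono fun δ h => h.2)⟩
  -- coboundedness of u from below (u eventually ≥ 0)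
  have hu0 : ∀ᶠ δ in l, (0:ℝ) ≤ u δ := by
    filter_upwards [E1, E2] with δ h0 h1'
    have hld : 0 < -Real.log δ := by
      have := Real.log_neg h0 h1'
      linarith
    exact div_nonneg (Real.log_natCast_nonneg _) hld.le
  have hcob : IsCoboundedUnder (· ≤ ·) l u :=
    isCoboundedUnder_le_of_eventually_le l hu0
  -- the -log δ → ∞ fact
  have hlogtop : Tendsto (fun δ : ℝ => -Real.log δ) l atTop :=
    tendsto_neg_atBot_atTop.comp Real.tendsto_log_nhdsGT_zero
  refine le_of_forall_pos_le_add fun ε hε => ?_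
  set K : ℝ := Real.log (2*C) + (max B 0) * Real.log c with hK
  have hK0 : 0 ≤ K := by
    have h2C : (1:ℝ) ≤ 2*C := by linarith
    have := Real.log_nonneg h2C
    have := Real.log_nonneg hc
    nlinarith [le_max_right B (0:ℝ)]
  have hlv₁ : ∀ᶠ δ in l, v₁ δ < L + ε/2 := by
    refine eventually_lt_of_limsup_lt ?_ hbdd₁
    have : limsup v₁ l ≤ L := le_max_left _ _
    linarith
  have hlv₂ : ∀ᶠ δ in l, v₂ δ < L + ε/2 := by
    refine eventually_lt_of_limsup_lt ?_ hbdd₂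
    have : limsup v₂ l ≤ L := le_max_right _ _
    linarith
  have hsmall : ∀ᶠ δ in l, K / (-Real.log δ) ≤ ε/2 := by
    filter_upwards [hlogtop.eventually_ge_atTop (max (K/(ε/2)) 1)] with δ hδ
    have hD : (1:ℝ) ≤ -Real.log δ := le_trans (le_max_right _ _) hδ
    have hD0 : (0:ℝ) < -Real.log δ := lt_of_lt_of_le one_pos hD
    rw [div_le_iff₀ hD0]
    calc K = (K/(ε/2)) * (ε/2) := by field_simp
    _ ≤ (-Real.log δ) * (ε/2) := by
        apply mul_le_mul_of_nonneg_right (le_trans (le_max_left _ _) hδ) (by linarith)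
    _ = ε/2 * (-Real.log δ) := mul_comm _ _
  have hmain : ∀ᶠ δ in l, u δ ≤ L + ε := by
    filter_upwards [E1, E2, h1, htend.eventually hlv₁, htend.eventually hlv₂,
      htend.eventually hpos, htend.eventually hB, hsmall,
      htend.eventually E2] with δ h0 h1' hN hw₁ hw₂ hp hBp hsm hδc1
    -- notation
    set N' : ℕ := coverNum F' δ
    set N₁ : ℕ := coverNum F₁ (δ/c)
    set N₂ : ℕ := coverNum F₂ (δ/c)
    have hD0 : 0 < -Real.log δ := by have := Real.log_neg h0 h1'; linarith
    have hδc0 : 0 < δ / c := div_pos h0 hc0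
    have hA0 : 0 < -Real.log (δ/c) := by have := Real.log_neg hδc0 hδc1; linarith
    set A : ℝ := -Real.log (δ/c) with hAdef
    set D : ℝ := -Real.log δ with hDdef
    have hAD : A = D + Real.log c := by
      rw [hAdef, hDdef, Real.log_div (ne_of_gt h0) (ne_of_gt hc0)]; ring
    set m : ℝ := max (v₁ (δ/c)) (v₂ (δ/c)) with hm
    have hm0 : 0 ≤ m := le_trans (div_nonneg (Real.log_natCast_nonneg N₁) hA0.le) (le_max_left _ _)
    have hmB : m ≤ max B 0 := le_trans (max_le_max hBp.1 hBp.2) (by simp)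
    have hmL : m < L + ε/2 := max_lt hw₁ hw₂
    -- log N_j = v_j * A
    have hlog₁ : Real.log N₁ = v₁ (δ/c) * A := by
      rw [hv₁]; exact (div_mul_cancel₀ _ hA0.ne').symm
    have hlog₂ : Real.log N₂ = v₂ (δ/c) * A := by
      rw [hv₂]; exact (div_mul_cancel₀ _ hA0.ne').symm
    have hN₁1 : (1:ℝ) ≤ (N₁:ℝ) := by exact_mod_cast hp.1
    have hN₂1 : (1:ℝ) ≤ (N₂:ℝ) := by exact_mod_cast hp.2
    have hmaxlog : Real.log (max (N₁:ℝ) (N₂:ℝ)) = m * A := by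
      have hmulmax : m * A = max (v₁ (δ/c) * A) (v₂ (δ/c) * A) := max_mul_of_nonneg _ _ hA0.le
      rw [hmulmax, ← hlog₁, ← hlog₂]
      rcases le_total (N₁:ℝ) (N₂:ℝ) with h | h
      · rw [max_eq_right h, max_eq_right (Real.log_le_log (by linarith) h)]
      · rw [max_eq_left h, max_eq_left (Real.log_le_log (by linarith) h)]
    have h2C0 : (0:ℝ) < 2*C := by linarith
    have hlog2C : 0 ≤ Real.log (2*C) := Real.log_nonneg (by linarith)
    have hN'log : Real.log (N':ℝ) ≤ Real.log (2*C) + m*A := by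
      rcases Nat.eq_zero_or_pos N' with h | h
      · rw [h]
        simp only [Nat.cast_zero, Real.log_zero]
        nlinarith [mul_nonneg hm0 hA0.le]
      · have hN'pos : (0:ℝ) < (N':ℝ) := by exact_mod_cast h
        have hNle : (N':ℝ) ≤ 2*C * max (N₁:ℝ) (N₂:ℝ) := by
          have l1 := le_max_left (N₁:ℝ) (N₂:ℝ)
          have l2 := le_max_right (N₁:ℝ) (N₂:ℝ)
          calc (N':ℝ) ≤ C * ((N₁:ℝ) + (N₂:ℝ)) := hN
          _ ≤ C * (2 * max (N₁:ℝ) (N₂:ℝ)) := by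
              apply mul_le_mul_of_nonneg_left (by linarith) (by linarith)
          _ = 2*C * max (N₁:ℝ) (N₂:ℝ) := by ring
        calc Real.log (N':ℝ) ≤ Real.log (2*C * max (N₁:ℝ) (N₂:ℝ)) :=
              Real.log_le_log hN'pos hNle
        _ = Real.log (2*C) + Real.log (max (N₁:ℝ) (N₂:ℝ)) :=
              Real.log_mul (ne_of_gt h2C0) (by positivity)
        _ = Real.log (2*C) + m*A := by rw [hmaxlog]
    have hstep : u δ ≤ (Real.log (2*C) + m*A)/D := by
      have heq : u δ = Real.log (N':ℝ)/D := rfl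
      rw [heq]
      gcongr
    have hfinal : (Real.log (2*C) + m*A)/D ≤ K/D + m := by
      rw [hAD]
      have hnum : Real.log (2*C) + m*(D + Real.log c)
          = (Real.log (2*C) + m*Real.log c) + m*D := by ring
      rw [hnum, add_div, mul_div_assoc, div_self (ne_of_gt hD0), mul_one]
      have hle : Real.log (2*C) + m*Real.log c ≤ K := by
        have hlogc : 0 ≤ Real.log c := Real.log_nonneg hc
        have := mul_le_mul_of_nonneg_right hmB hlogc
        rw [hK]; linarith
      have h2 : (Real.log (2*C) + m*Real.log c)/D ≤ K/D := by gcongr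
      linarith
    have := hstep.trans hfinal
    linarith [hsm, hmL, this]
  exact limsup_le_of_le hcob hmain

noncomputable def osc (f : ℝ → ℝ) (s : Set ℝ) : ℝ := sSup (f '' s) - sInf (f '' s)
def Jcol (δ : ℝ) (i : ℕ) : Set ℝ := Icc (i*δ) (min ((i+1)*δ) 1)

lemma G_compact {f : ℝ → ℝ} (hf : ContinuousOn f (Icc 0 1)) : IsCompact (G f) :=
  isCompact_Icc.image_of_continuousOn (continuousOn_id.prodMk hf)

lemma G_nonempty (f : ℝ → ℝ) : (G f).Nonempty :=
  ⟨(0, f 0), ⟨0, by simp, rfl⟩⟩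

lemma mem_G {f : ℝ → ℝ} {x : ℝ} (hx : x ∈ Icc (0:ℝ) 1) : (x, f x) ∈ G f := ⟨x, hx, rfl⟩

section OscLemmas
variable {f : ℝ → ℝ} {s : Set ℝ}

lemma osc_pair (hs : IsCompact s) (hf : ContinuousOn f s)
    {x y : ℝ} (hx : x ∈ s) (hy : y ∈ s) : f x - f y ≤ osc f s := by
  have himg : IsCompact (f '' s) := hs.image_of_continuousOn hf
  have h1 : f x ≤ sSup (f '' s) := le_csSup himg.bddAbove ⟨x, hx, rfl⟩
  have h2 : sInf (f '' s) ≤ f y := csInf_le himg.bddBelow ⟨y, hy, rfl⟩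
  unfold osc; linarith

lemma osc_nonneg (hs : IsCompact s) (hf : ContinuousOn f s) (hne : s.Nonempty) :
    0 ≤ osc f s := by
  obtain ⟨x, hx⟩ := hne
  have := osc_pair hs hf hx hx
  linarith

lemma abs_sub_le_osc (hs : IsCompact s) (hf : ContinuousOn f s)
    {x y : ℝ} (hx : x ∈ s) (hy : y ∈ s) : |f x - f y| ≤ osc f s :=
  abs_le.mpr ⟨by have := osc_pair hs hf hy hx; linarith, osc_pair hs hf hx hy⟩

lemma osc_le_two_bound (hs : IsCompact s) (hne : s.Nonempty) (hf : ContinuousOn f s)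
    {R : ℝ} (hR : ∀ x ∈ s, |f x| ≤ R) : osc f s ≤ 2 * R := by
  have himg : IsCompact (f '' s) := hs.image_of_continuousOn hf
  have h1 : sSup (f '' s) ∈ f '' s := himg.sSup_mem (hne.image f)
  have h2 : sInf (f '' s) ∈ f '' s := himg.sInf_mem (hne.image f)
  obtain ⟨x, hx, hx'⟩ := h1
  obtain ⟨y, hy, hy'⟩ := h2
  have := abs_le.mp (hR x hx)
  have := abs_le.mp (hR y hy)
  unfold osc
  rw [← hx', ← hy']
  linarith [this.1, this.2]

lemma osc_mul_le {g : ℝ → ℝ} (hs : IsCompact s) (hne : s.Nonempty)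
    (hf : ContinuousOn f s) (hg : ContinuousOn g s)
    {R : ℝ} (hR0 : 0 ≤ R) (hRf : ∀ x ∈ s, |f x| ≤ R) (hRg : ∀ x ∈ s, |g x| ≤ R) :
    osc (f * g) s ≤ R * osc g s + R * osc f s := by
  have hfg : ContinuousOn (f * g) s := hf.mul hg
  have himg : IsCompact ((f*g) '' s) := hs.image_of_continuousOn hfg
  have h1 : sSup ((f*g) '' s) ∈ (f*g) '' s := himg.sSup_mem (hne.image _)
  have h2 : sInf ((f*g) '' s) ∈ (f*g) '' s := himg.sInf_mem (hne.image _)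
  obtain ⟨u, hu, hu'⟩ := h1
  obtain ⟨v, hv, hv'⟩ := h2
  have key : osc (f*g) s = f u * g u - f v * g v := by
    unfold osc; rw [← hu', ← hv']; simp [Pi.mul_apply]
  have e1 : f u * (g u - g v) ≤ R * osc g s := by
    calc f u * (g u - g v) ≤ |f u * (g u - g v)| := le_abs_self _
    _ = |f u| * |g u - g v| := abs_mul _ _
    _ ≤ R * osc g s :=
        mul_le_mul (hRf u hu) (abs_sub_le_osc hs hg hu hv) (abs_nonneg _) hR0
  have e2 : g v * (f u - f v) ≤ R * osc f s := by
    calc g v * (f u - f v) ≤ |g v * (f u - f v)| := le_abs_self _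
    _ = |g v| * |f u - f v| := abs_mul _ _
    _ ≤ R * osc f s :=
        mul_le_mul (hRg v hv) (abs_sub_le_osc hs hf hu hv) (abs_nonneg _) hR0
  nlinarith [key, e1, e2]

end OscLemmas

section JcolLemmas
variable {δ : ℝ} (hδ0 : 0 < δ)

include hδ0 in
lemma Jcol_subset (i : ℕ) : Jcol δ i ⊆ Icc 0 1 := by
  intro x hx
  rcases hx with ⟨h1, h2⟩
  have h0 : (0:ℝ) ≤ (i:ℝ) * δ := mul_nonneg (Nat.cast_nonneg i) hδ0.le
  exact ⟨h0.trans h1, h2.trans (min_le_right _ _)⟩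

lemma Jcol_isCompact (δ : ℝ) (i : ℕ) : IsCompact (Jcol δ i) := isCompact_Icc

include hδ0 in
lemma Jcol_le {i : ℕ} (hi : i < ⌈1/δ⌉₊) : (i:ℝ) * δ ≤ min ((i+1)*δ) 1 := by
  have h1 : (i:ℝ) < 1/δ := Nat.lt_ceil.mp hi
  have h2 : (i:ℝ) * δ < 1 := by
    rw [lt_div_iff₀ hδ0] at h1; linarith
  refine le_min ?_ h2.le
  nlinarith

include hδ0 in
lemma Jcol_nonempty {i : ℕ} (hi : i < ⌈1/δ⌉₊) : ((i:ℝ)*δ) ∈ Jcol δ i :=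
  ⟨le_refl _, Jcol_le hδ0 hi⟩

include hδ0 in
lemma Jcol_cover {x : ℝ} (hx : x ∈ Icc (0:ℝ) 1) :
    ∃ i < ⌈1/δ⌉₊, x ∈ Jcol δ i := by
  set n := ⌈1/δ⌉₊ with hn
  have hn1 : 1 ≤ n := by
    rw [hn]; exact Nat.one_le_ceil_iff.mpr (by positivity)
  have hnδ : (1:ℝ) ≤ n * δ := by
    have := Nat.le_ceil (1/δ)
    rw [← hn] at this
    calc (1:ℝ) = (1/δ) * δ := by field_simp
    _ ≤ n * δ := by nlinarith
  rcases hx with ⟨hx0, hx1⟩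
  have hfl : (⌊x/δ⌋₊ : ℝ) ≤ x/δ := Nat.floor_le (by positivity)
  have hfl2 : x/δ < (⌊x/δ⌋₊:ℝ) + 1 := Nat.lt_floor_add_one (x/δ)
  have hxd : (x/δ)*δ = x := by field_simp
  by_cases h : ⌊x/δ⌋₊ < n
  · refine ⟨⌊x/δ⌋₊, h, ?_, le_min ?_ hx1⟩
    · nlinarith
    · nlinarith
  · push_neg at h
    refine ⟨n - 1, by omega, ?_, ?_⟩
    · have hcast : ((n-1:ℕ):ℝ) = (n:ℝ) - 1 := by
        push_cast [Nat.cast_sub hn1]; ring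
      rw [hcast]
      have h1 : (n:ℝ) ≤ ⌊x/δ⌋₊ := by exact_mod_cast h
      nlinarith
    · refine le_min ?_ hx1
      have hcast : ((n-1:ℕ):ℝ) + 1 = (n:ℝ) := by
        push_cast [Nat.cast_sub hn1]; ring
      rw [hcast]
      linarith

end JcolLemmas

lemma coverNum_le_sum_osc {f : ℝ → ℝ} (hf : ContinuousOn f (Icc 0 1))
    {δ : ℝ} (hδ0 : 0 < δ) :
    (coverNum (G f) δ : ℝ) ≤
      ∑ i ∈ Finset.range ⌈1/δ⌉₊, (osc f (Jcol δ i) / (2*δ) + 1) := by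
  classical
  set n := ⌈1/δ⌉₊ with hn
  set k : ℕ → ℕ := fun i => ⌊osc f (Jcol δ i) / (2*δ)⌋₊ + 1 with hk
  set ctr : ℕ → ℕ → ℝ×ℝ :=
    fun i j => ((i:ℝ)*δ + δ/2, sInf (f '' Jcol δ i) + δ*(2*(j:ℝ)+1)) with hctr
  set t : Finset (ℝ×ℝ) :=
    (Finset.range n).biUnion (fun i => (Finset.range (k i)).image (ctr i)) with ht
  have hcov : G f ⊆ ⋃ p ∈ t, closedBall p δ := by
    rintro _ ⟨x, hx, rfl⟩
    obtain ⟨i, hi, hxi⟩ := Jcol_cover hδ0 hx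
    have hsub := Jcol_subset hδ0 i
    have hcomp := Jcol_isCompact δ i
    have hfi : ContinuousOn f (Jcol δ i) := hf.mono hsub
    have himg : IsCompact (f '' Jcol δ i) := hcomp.image_of_continuousOn hfi
    have hmle : sInf (f '' Jcol δ i) ≤ f x := csInf_le himg.bddBelow ⟨x, hxi, rfl⟩
    have hMge : f x ≤ sSup (f '' Jcol δ i) := le_csSup himg.bddAbove ⟨x, hxi, rfl⟩
    set m := sInf (f '' Jcol δ i) with hm
    set y := f x - m with hy
    have hy0 : 0 ≤ y := by simp [hy]; linarith
    have hosc : osc f (Jcol δ i) = sSup (f '' Jcol δ i) - m := rfl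
    have hyosc : y ≤ osc f (Jcol δ i) := by rw [hosc, hy]; linarith
    set j := ⌊y/(2*δ)⌋₊ with hj
    have hjk : j < k i := by
      have hdd : y/(2*δ) ≤ osc f (Jcol δ i)/(2*δ) := by gcongr
      have := Nat.floor_mono hdd
      simp only [hk]
      omega
    refine mem_iUnion₂.mpr ⟨ctr i j, ?_, ?_⟩
    · rw [ht]
      exact Finset.mem_biUnion.mpr ⟨i, Finset.mem_range.mpr hi,
        Finset.mem_image_of_mem _ (Finset.mem_range.mpr hjk)⟩
    · rw [mem_closedBall, Prod.dist_eq]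
      have hx1 : (i:ℝ)*δ ≤ x := hxi.1
      have hx2 : x ≤ ((i:ℝ)+1)*δ := hxi.2.trans (min_le_left _ _)
      have hq0 : (0:ℝ) ≤ y/(2*δ) := by positivity
      have h2δ : (0:ℝ) < 2*δ := by positivity
      have hfloor1 : (j:ℝ)*(2*δ) ≤ y := by
        have h' := mul_le_mul_of_nonneg_right (Nat.floor_le hq0) h2δ.le
        rw [div_mul_cancel₀ _ (ne_of_gt h2δ)] at h'
        rw [hj]; exact h'
      have hfloor2 : y < ((j:ℝ)+1)*(2*δ) := by
        have h' := mul_lt_mul_of_pos_right (Nat.lt_floor_add_one (y/(2*δ))) h2δ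
        rw [div_mul_cancel₀ _ (ne_of_gt h2δ)] at h'
        rw [hj]; exact h'
      have hyfx : y = f x - m := hy
      apply max_le
      · show dist x ((i:ℝ)*δ + δ/2) ≤ δ
        rw [Real.dist_eq]
        apply abs_le.mpr
        exact ⟨by linarith, by linarith⟩
      · show dist (f x) (m + δ*(2*(j:ℝ)+1)) ≤ δ
        rw [Real.dist_eq]
        apply abs_le.mpr
        exact ⟨by linarith, by linarith⟩
  have hcard : t.card ≤ ∑ i ∈ Finset.range n, k i :=
    le_trans Finset.card_biUnion_le
      (Finset.sum_le_sum fun i _ => (Finset.card_image_le).trans_eq (Finset.card_range _))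
  have h1 : coverNum (G f) δ ≤ t.card := coverNum_le hcov
  calc (coverNum (G f) δ : ℝ) ≤ ((∑ i ∈ Finset.range n, k i : ℕ) : ℝ) := by
        exact_mod_cast h1.trans hcard
  _ ≤ ∑ i ∈ Finset.range n, (osc f (Jcol δ i)/(2*δ) + 1) := by
      push_cast
      apply Finset.sum_le_sum
      intro i hi
      have hne : (Jcol δ i).Nonempty := ⟨_, Jcol_nonempty hδ0 (Finset.mem_range.mp hi)⟩
      have h0 : 0 ≤ osc f (Jcol δ i)/(2*δ) :=
        div_nonneg (osc_nonneg (Jcol_isCompact δ i) (hf.mono (Jcol_subset hδ0 i)) hne)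
          (by positivity)
      have := Nat.floor_le h0
      have hki : ((k i : ℕ) : ℝ) = (⌊osc f (Jcol δ i) / (2*δ)⌋₊ : ℝ) + 1 := Nat.cast_succ _
      linarith

lemma coords_close {δ x y : ℝ} {p : ℝ×ℝ} (h : ((x,y) : ℝ×ℝ) ∈ closedBall p δ) :
    |x - p.1| ≤ δ ∧ |y - p.2| ≤ δ := by
  rw [mem_closedBall, Prod.dist_eq] at h
  constructor
  · rw [← Real.dist_eq]; exact le_trans (le_max_left _ _) h
  · rw [← Real.dist_eq]; exact le_trans (le_max_right _ _) h

lemma sum_osc_le {f : ℝ → ℝ} (hf : ContinuousOn f (Icc 0 1))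
    {δ : ℝ} (hδ0 : 0 < δ) :
    (∑ i ∈ Finset.range ⌈1/δ⌉₊, osc f (Jcol δ i)) ≤ 12 * δ * (coverNum (G f) δ) ∧
    ((⌈1/δ⌉₊ : ℝ)) ≤ 6 * (coverNum (G f) δ) := by
  classical
  set n := ⌈1/δ⌉₊ with hn
  obtain ⟨t, htcard, htcov⟩ := exists_coverNum_cover (G_compact hf) hδ0
  set P : ℕ → ℝ×ℝ → Prop := fun i p => ∃ x ∈ Jcol δ i, (x, f x) ∈ closedBall p δ with hP
  set T : ℕ → Finset (ℝ×ℝ) := fun i => t.filter (P i) with hT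
  have h2δ : (0:ℝ) ≤ 2*δ := by positivity
  have claimA : ∀ i < n, osc f (Jcol δ i) ≤ ((T i).card : ℝ) * (2*δ) := by
    intro i hi
    have hsub := Jcol_subset hδ0 i
    have hfi : ContinuousOn f (Jcol δ i) := hf.mono hsub
    have hab : (i:ℝ)*δ ≤ min (((i:ℝ)+1)*δ) 1 := (Jcol_nonempty hδ0 hi).2
    have himgIcc : f '' Jcol δ i = Icc (sInf (f '' Jcol δ i)) (sSup (f '' Jcol δ i)) :=
      ContinuousOn.image_Icc hab hfi
    set m := sInf (f '' Jcol δ i) with hm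
    set M := sSup (f '' Jcol δ i) with hM
    have hIcc_sub : Icc m M ⊆ ⋃ p ∈ (T i : Finset (ℝ×ℝ)), Icc (p.2 - δ) (p.2 + δ) := by
      intro y hy
      rw [← himgIcc] at hy
      obtain ⟨x, hxJ, hfx⟩ := hy
      have hxI : x ∈ Icc (0:ℝ) 1 := hsub hxJ
      have hcv := htcov (mem_G hxI)
      rw [mem_iUnion₂] at hcv
      obtain ⟨p, hp, hpd⟩ := hcv
      have hpT : p ∈ T i := Finset.mem_filter.mpr ⟨hp, ⟨x, hxJ, hpd⟩⟩
      have hd2 := (coords_close hpd).2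
      have habs := abs_le.mp hd2
      exact mem_iUnion₂.mpr ⟨p, hpT, ⟨by rw [← hfx]; linarith [habs.1], by rw [← hfx]; linarith [habs.2]⟩⟩
    have hvol : ENNReal.ofReal (M - m) ≤ ((T i).card : ℝ≥0∞) * ENNReal.ofReal (2*δ) := by
      calc ENNReal.ofReal (M-m) = MeasureTheory.volume (Icc m M) := (Real.volume_Icc).symm
      _ ≤ MeasureTheory.volume (⋃ p ∈ (T i : Finset (ℝ×ℝ)), Icc (p.2-δ) (p.2+δ)) :=
          MeasureTheory.measure_mono hIcc_sub
      _ ≤ ∑ p ∈ T i, MeasureTheory.volume (Icc (p.2-δ) (p.2+δ)) :=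
          MeasureTheory.measure_biUnion_finset_le _ _
      _ = ∑ _p ∈ T i, ENNReal.ofReal (2*δ) := by
          apply Finset.sum_congr rfl; intro p _; rw [Real.volume_Icc]; congr 1; ring
      _ = ((T i).card : ℝ≥0∞) * ENNReal.ofReal (2*δ) := by
          rw [Finset.sum_const, nsmul_eq_mul]
    rw [show ((T i).card : ℝ≥0∞) * ENNReal.ofReal (2*δ)
        = ENNReal.ofReal (((T i).card : ℝ) * (2*δ)) by
        rw [ENNReal.ofReal_mul (Nat.cast_nonneg _), ENNReal.ofReal_natCast]] at hvol
    exact (ENNReal.ofReal_le_ofReal_iff (mul_nonneg (Nat.cast_nonneg _) h2δ)).mp hvol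
  have keyp : ∀ p : ℝ×ℝ, ((Finset.range n).filter (fun i => P i p)).card ≤ 6 := by
    intro p
    set S := (Finset.range n).filter (fun i => P i p) with hS
    rcases S.eq_empty_or_nonempty with h | h
    · simp [h]
    · have hmin := S.min'_mem h
      set i₀ := S.min' h with hi₀
      obtain ⟨x₀, hx₀J, hx₀d⟩ := (Finset.mem_filter.mp hmin).2
      have hd₀ := abs_le.mp (coords_close hx₀d).1
      have hsubIcc : S ⊆ Finset.Icc i₀ (i₀ + 3) := by
        intro i hiS
        rw [Finset.mem_Icc]
        refine ⟨S.min'_le i hiS, ?_⟩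
        obtain ⟨x, hxJ, hxd⟩ := (Finset.mem_filter.mp hiS).2
        have hd := abs_le.mp (coords_close hxd).1
        have e1 : (i:ℝ)*δ ≤ x := hxJ.1
        have e2 : x₀ ≤ ((i₀:ℝ)+1)*δ := hx₀J.2.trans (min_le_left _ _)
        have hile : (i:ℝ) ≤ (i₀:ℝ) + 3 := by nlinarith [hd.1, hd.2, hd₀.1, hd₀.2]
        exact_mod_cast hile
      calc S.card ≤ (Finset.Icc i₀ (i₀+3)).card := Finset.card_le_card hsubIcc
      _ ≤ 6 := by rw [Nat.card_Icc]; omega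
  have claimB : ∑ i ∈ Finset.range n, (T i).card ≤ 6 * t.card := by
    have hswap : ∑ i ∈ Finset.range n, (T i).card
        = ∑ p ∈ t, ((Finset.range n).filter (fun i => P i p)).card := by
      simp only [hT, Finset.card_filter]
      rw [Finset.sum_comm]
    rw [hswap]
    calc ∑ p ∈ t, ((Finset.range n).filter (fun i => P i p)).card ≤ ∑ _p ∈ t, 6 :=
        Finset.sum_le_sum (fun p _ => keyp p)
    _ = 6 * t.card := by rw [Finset.sum_const, smul_eq_mul]; omega
  have claimC : ∀ i < n, 1 ≤ (T i).card := by
    intro i hi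
    have hxJ := Jcol_nonempty hδ0 hi
    have hxI : ((i:ℝ)*δ) ∈ Icc (0:ℝ) 1 := Jcol_subset hδ0 i hxJ
    have hcv := htcov (mem_G hxI)
    rw [mem_iUnion₂] at hcv
    obtain ⟨p, hp, hpd⟩ := hcv
    exact Finset.card_pos.mpr ⟨p, Finset.mem_filter.mpr ⟨hp, ⟨_, hxJ, hpd⟩⟩⟩
  have hsumcard : (∑ i ∈ Finset.range n, ((T i).card :ℝ)) ≤ 6 * (coverNum (G f) δ) := by
    have : ((∑ i ∈ Finset.range n, (T i).card : ℕ) : ℝ) ≤ ((6 * t.card : ℕ) : ℝ) := by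
      exact_mod_cast claimB
    push_cast at this
    rw [htcard] at this
    push_cast at this ⊢
    linarith
  constructor
  · calc ∑ i ∈ Finset.range n, osc f (Jcol δ i)
        ≤ ∑ i ∈ Finset.range n, ((T i).card : ℝ) * (2*δ) :=
          Finset.sum_le_sum (fun i hi => claimA i (Finset.mem_range.mp hi))
    _ = (∑ i ∈ Finset.range n, ((T i).card : ℝ)) * (2*δ) := by rw [← Finset.sum_mul]
    _ ≤ (6 * (coverNum (G f) δ)) * (2*δ) := by
        apply mul_le_mul_of_nonneg_right hsumcard h2δ
    _ = 12 * δ * (coverNum (G f) δ) := by ring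
  · have h1 : (n:ℝ) ≤ ∑ i ∈ Finset.range n, ((T i).card : ℝ) := by
      have : (n:ℕ) ≤ ∑ i ∈ Finset.range n, (T i).card := by
        calc n = ∑ _i ∈ Finset.range n, 1 := by simp
        _ ≤ ∑ i ∈ Finset.range n, (T i).card :=
          Finset.sum_le_sum (fun i hi => claimC i (Finset.mem_range.mp hi))
      exact_mod_cast this
    linarith

lemma coverNum_image_le {α : Type*} [PseudoMetricSpace α] {F : Set α} (hF : IsCompact F)
    {φ : α → α} {L : ℝ} (hL : 0 ≤ L)
    (hφ : ∀ p ∈ F, ∀ q ∈ F, dist (φ p) (φ q) ≤ L * dist p q)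
    {δ : ℝ} (hδ : 0 < δ) :
    coverNum (φ '' F) (2*L*δ) ≤ coverNum F δ := by
  classical
  obtain ⟨t, htcard, htcov⟩ := exists_coverNum_cover hF hδ
  set ψ : α → α := fun p => if h : (F ∩ closedBall p δ).Nonempty then h.choose else p with hψ
  set t' := t.image (fun p => φ (ψ p)) with ht'
  have hcov : φ '' F ⊆ ⋃ q ∈ t', closedBall q (2*L*δ) := by
    rintro _ ⟨x, hx, rfl⟩
    have hc := htcov hx
    rw [mem_iUnion₂] at hc
    obtain ⟨p, hp, hpd⟩ := hc
    have hne : (F ∩ closedBall p δ).Nonempty := ⟨x, hx, hpd⟩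
    have hq := hne.choose_spec
    have hψp : ψ p = hne.choose := by rw [hψ]; simp only [dif_pos hne]
    refine mem_iUnion₂.mpr ⟨φ (ψ p), Finset.mem_image_of_mem _ hp, ?_⟩
    rw [mem_closedBall]
    have hqF : ψ p ∈ F := by rw [hψp]; exact hq.1
    have hd : dist x (ψ p) ≤ 2*δ := by
      rw [hψp]
      calc dist x hne.choose ≤ dist x p + dist p hne.choose := dist_triangle _ _ _
      _ ≤ δ + δ := add_le_add hpd (by rw [dist_comm]; exact hq.2)
      _ = 2*δ := by ring
    calc dist (φ x) (φ (ψ p)) ≤ L * dist x (ψ p) := hφ x hx _ hqF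
    _ ≤ L * (2*δ) := mul_le_mul_of_nonneg_left hd hL
    _ = 2*L*δ := by ring
  calc coverNum (φ '' F) (2*L*δ) ≤ t'.card := coverNum_le hcov
  _ ≤ t.card := Finset.card_image_le
  _ = _ := htcard

lemma G_inv_eq (g : ℝ → ℝ) : (fun p : ℝ×ℝ => (p.1, p.2⁻¹)) '' G g = G g⁻¹ := by
  unfold G fnGraphOn
  rw [image_image]
  rfl

lemma inv_lipschitz_on_G {g : ℝ → ℝ} {m : ℝ} (hm0 : 0 < m)
    (hm : ∀ x ∈ Icc (0:ℝ) 1, m ≤ |g x|) :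
    ∀ p ∈ G g, ∀ q ∈ G g,
      dist ((fun p : ℝ×ℝ => (p.1, p.2⁻¹)) p) ((fun p : ℝ×ℝ => (p.1, p.2⁻¹)) q)
        ≤ (max 1 (1/(m*m))) * dist p q := by
  rintro _ ⟨x, hx, rfl⟩ _ ⟨y, hy, rfl⟩
  set L := max 1 (1/(m*m)) with hLdef
  have hL1 : (1:ℝ) ≤ L := le_max_left _ _
  have hL0 : (0:ℝ) ≤ L := by linarith
  have hgx : m ≤ |g x| := hm x hx
  have hgy : m ≤ |g y| := hm y hy
  have hgx0 : g x ≠ 0 := fun h => by rw [h] at hgx; simp at hgx; linarith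
  have hgy0 : g y ≠ 0 := fun h => by rw [h] at hgy; simp at hgy; linarith
  simp only [Prod.dist_eq]
  have hd1 : dist x y ≤ max (dist x y) (dist (g x) (g y)) := le_max_left _ _
  apply max_le
  · calc dist x y ≤ max (dist x y) (dist (g x) (g y)) := hd1
    _ ≤ L * max (dist x y) (dist (g x) (g y)) :=
        le_mul_of_one_le_left (le_max_of_le_left dist_nonneg) hL1
  · have hinv : (g x)⁻¹ - (g y)⁻¹ = (g y - g x) / (g x * g y) := inv_sub_inv hgx0 hgy0
    have habs : dist (g x)⁻¹ (g y)⁻¹ = |g y - g x| / (|g x| * |g y|) := by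
      rw [Real.dist_eq, hinv, abs_div, abs_mul]
    rw [habs]
    have hmm : m * m ≤ |g x| * |g y| := mul_le_mul hgx hgy hm0.le (abs_nonneg _)
    have hmm0 : (0:ℝ) < m * m := by positivity
    calc |g y - g x| / (|g x| * |g y|) ≤ |g y - g x| / (m*m) :=
        div_le_div_of_nonneg_left (abs_nonneg _) hmm0 hmm
    _ = (1/(m*m)) * |g y - g x| := by ring
    _ ≤ L * max (dist x y) (dist (g x) (g y)) := by
        apply mul_le_mul (le_max_right _ _) ?_ (abs_nonneg _) hL0
        rw [abs_sub_comm, ← Real.dist_eq]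
        exact le_max_right _ _

-- bound on |f|
lemma exists_fn_bound {f : ℝ → ℝ} (hf : ContinuousOn f (Icc 0 1)) :
    ∃ R : ℝ, 1 ≤ R ∧ ∀ x ∈ Icc (0:ℝ) 1, |f x| ≤ R := by
  obtain ⟨x₀, hx₀, hmax⟩ := isCompact_Icc.exists_isMaxOn (nonempty_Icc.mpr zero_le_one) hf.abs
  exact ⟨max 1 |f x₀|, le_max_left _ _,
    fun x hx => le_trans (hmax hx) (le_max_right _ _)⟩

-- eventual facts
lemma eventually_basic : ∀ᶠ δ in 𝓝[>] (0:ℝ), 0 < δ ∧ δ < 1 :=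
  Filter.Eventually.and self_mem_nhdsWithin
    (Filter.Eventually.filter_mono nhdsWithin_le_nhds (eventually_lt_nhds one_pos))

lemma eventually_hpos {f g : ℝ → ℝ} (hf : ContinuousOn f (Icc 0 1))
    (hg : ContinuousOn g (Icc 0 1)) :
    ∀ᶠ δ in 𝓝[>] (0:ℝ), 1 ≤ coverNum (G f) δ ∧ 1 ≤ coverNum (G g) δ := by
  filter_upwards [eventually_basic] with δ hδ
  exact ⟨one_le_coverNum (G_compact hf) (G_nonempty f) hδ.1,
         one_le_coverNum (G_compact hg) (G_nonempty g) hδ.1⟩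

-- coverNum polynomial bound
lemma coverNum_G_le {f : ℝ → ℝ} (hf : ContinuousOn f (Icc 0 1))
    {R : ℝ} (hR1 : 1 ≤ R) (hR : ∀ x ∈ Icc (0:ℝ) 1, |f x| ≤ R)
    {δ : ℝ} (hδ0 : 0 < δ) (hδ1 : δ < 1) :
    (coverNum (G f) δ : ℝ) ≤ 4*R/δ^2 := by
  have hn : (⌈1/δ⌉₊ : ℝ) ≤ 2/δ := by
    have h1 : (⌈1/δ⌉₊ : ℝ) < 1/δ + 1 := Nat.ceil_lt_add_one (by positivity)
    have h2 : (1:ℝ) ≤ 1/δ := by rw [le_div_iff₀ hδ0]; linarith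
    have h3 : (2:ℝ)/δ = 1/δ + 1/δ := by ring
    linarith [h1, h2]
  calc (coverNum (G f) δ : ℝ)
      ≤ ∑ i ∈ Finset.range ⌈1/δ⌉₊, (osc f (Jcol δ i) / (2*δ) + 1) :=
        coverNum_le_sum_osc hf hδ0
  _ ≤ ∑ _i ∈ Finset.range ⌈1/δ⌉₊, (2*R/δ) := by
      apply Finset.sum_le_sum
      intro i hi
      have hsub := Jcol_subset hδ0 i
      have hne : (Jcol δ i).Nonempty := ⟨_, Jcol_nonempty hδ0 (Finset.mem_range.mp hi)⟩
      have hosc : osc f (Jcol δ i) ≤ 2*R :=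
        osc_le_two_bound (Jcol_isCompact δ i) hne (hf.mono hsub)
          (fun x hx => hR x (hsub hx))
      have hRδ : (1:ℝ) ≤ R/δ := by rw [le_div_iff₀ hδ0]; linarith
      have : osc f (Jcol δ i) / (2*δ) ≤ R/δ := by
        rw [div_le_div_iff₀ (by positivity) hδ0]
        nlinarith
      calc osc f (Jcol δ i) / (2*δ) + 1 ≤ R/δ + R/δ := by linarith
      _ = 2*R/δ := by ring
  _ = (⌈1/δ⌉₊ : ℝ) * (2*R/δ) := by rw [Finset.sum_const, nsmul_eq_mul, Finset.card_range]
  _ ≤ (2/δ) * (2*R/δ) := by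
      apply mul_le_mul_of_nonneg_right hn (by positivity)
  _ = 4*R/δ^2 := by field_simp; ring

lemma eventually_hB {f : ℝ → ℝ} (hf : ContinuousOn f (Icc 0 1)) :
    ∃ B : ℝ, ∀ᶠ δ in 𝓝[>] (0:ℝ), Real.log (coverNum (G f) δ) / -Real.log δ ≤ B := by
  obtain ⟨R, hR1, hR⟩ := exists_fn_bound hf
  refine ⟨Real.log (4*R) + 2, ?_⟩
  have hlogtop : Tendsto (fun δ : ℝ => -Real.log δ) (𝓝[>] (0:ℝ)) atTop :=
    tendsto_neg_atBot_atTop.comp Real.tendsto_log_nhdsGT_zero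
  filter_upwards [eventually_basic, hlogtop.eventually_ge_atTop 1] with δ hδ hD
  obtain ⟨hδ0, hδ1⟩ := hδ
  have hD0 : (0:ℝ) < -Real.log δ := lt_of_lt_of_le one_pos hD
  have hN1 : 1 ≤ coverNum (G f) δ := one_le_coverNum (G_compact hf) (G_nonempty f) hδ0
  have hNpos : (0:ℝ) < (coverNum (G f) δ : ℝ) := by exact_mod_cast hN1
  have hlogN : Real.log (coverNum (G f) δ) ≤ Real.log (4*R) + 2*(-Real.log δ) := by
    calc Real.log (coverNum (G f) δ) ≤ Real.log (4*R/δ^2) :=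
        Real.log_le_log hNpos (coverNum_G_le hf hR1 hR hδ0 hδ1)
    _ = Real.log (4*R) - Real.log (δ^2) := by
        rw [Real.log_div (by positivity) (by positivity)]
    _ = Real.log (4*R) + 2*(-Real.log δ) := by
        rw [Real.log_pow]; push_cast; ring
  have hlog4R : 0 ≤ Real.log (4*R) := Real.log_nonneg (by linarith)
  rw [div_le_iff₀ hD0]
  calc Real.log (coverNum (G f) δ) ≤ Real.log (4*R) + 2*(-Real.log δ) := hlogN
  _ ≤ (Real.log (4*R) + 2) * (-Real.log δ) := by nlinarith

-- product comparison
lemma eventually_product_cover {f g : ℝ → ℝ} (hf : ContinuousOn f (Icc 0 1))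
    (hg : ContinuousOn g (Icc 0 1)) {R : ℝ} (hR1 : 1 ≤ R)
    (hRf : ∀ x ∈ Icc (0:ℝ) 1, |f x| ≤ R) (hRg : ∀ x ∈ Icc (0:ℝ) 1, |g x| ≤ R) :
    ∀ᶠ δ in 𝓝[>] (0:ℝ), (coverNum (G (f*g)) δ : ℝ) ≤
      (6*R+6) * ((coverNum (G f) δ : ℝ) + (coverNum (G g) δ : ℝ)) := by
  filter_upwards [eventually_basic] with δ hδ
  obtain ⟨hδ0, hδ1⟩ := hδ
  set n := ⌈1/δ⌉₊ with hn
  have hfg : ContinuousOn (f*g) (Icc 0 1) := hf.mul hg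
  have hoscmul : ∀ i ∈ Finset.range n,
      osc (f*g) (Jcol δ i) / (2*δ) + 1 ≤ (R * osc g (Jcol δ i) + R * osc f (Jcol δ i))/(2*δ) + 1 := by
    intro i hi
    have hsub := Jcol_subset hδ0 i
    have hne : (Jcol δ i).Nonempty := ⟨_, Jcol_nonempty hδ0 (Finset.mem_range.mp hi)⟩
    have h := osc_mul_le (Jcol_isCompact δ i) hne (hf.mono hsub) (hg.mono hsub)
      (by linarith : (0:ℝ) ≤ R) (fun x hx => hRf x (hsub hx)) (fun x hx => hRg x (hsub hx))
    have h2δ : (0:ℝ) < 2*δ := by positivity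
    gcongr
  have hsum : (coverNum (G (f*g)) δ : ℝ)
      ≤ (R * (∑ i ∈ Finset.range n, osc g (Jcol δ i))
          + R * (∑ i ∈ Finset.range n, osc f (Jcol δ i)))/(2*δ) + n := by
    calc (coverNum (G (f*g)) δ : ℝ)
        ≤ ∑ i ∈ Finset.range n, (osc (f*g) (Jcol δ i) / (2*δ) + 1) :=
          coverNum_le_sum_osc hfg hδ0
    _ ≤ ∑ i ∈ Finset.range n, ((R * osc g (Jcol δ i) + R * osc f (Jcol δ i))/(2*δ) + 1) :=
          Finset.sum_le_sum hoscmul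
    _ = (R * (∑ i ∈ Finset.range n, osc g (Jcol δ i))
          + R * (∑ i ∈ Finset.range n, osc f (Jcol δ i)))/(2*δ) + n := by
        rw [Finset.sum_add_distrib, ← Finset.sum_div, Finset.sum_const, Finset.card_range,
          nsmul_eq_mul, mul_one, Finset.mul_sum, Finset.mul_sum, ← Finset.sum_add_distrib]
  obtain ⟨hsf, hnf⟩ := sum_osc_le hf hδ0
  obtain ⟨hsg, -⟩ := sum_osc_le hg hδ0
  have hoscf0 : 0 ≤ ∑ i ∈ Finset.range n, osc f (Jcol δ i) :=
    Finset.sum_nonneg fun i hi => osc_nonneg (Jcol_isCompact δ i)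
      (hf.mono (Jcol_subset hδ0 i)) ⟨_, Jcol_nonempty hδ0 (Finset.mem_range.mp hi)⟩
  have hoscg0 : 0 ≤ ∑ i ∈ Finset.range n, osc g (Jcol δ i) :=
    Finset.sum_nonneg fun i hi => osc_nonneg (Jcol_isCompact δ i)
      (hg.mono (Jcol_subset hδ0 i)) ⟨_, Jcol_nonempty hδ0 (Finset.mem_range.mp hi)⟩
  have hNf0 : (0:ℝ) ≤ (coverNum (G f) δ : ℝ) := Nat.cast_nonneg _
  have hNg0 : (0:ℝ) ≤ (coverNum (G g) δ : ℝ) := Nat.cast_nonneg _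
  have h2δ : (0:ℝ) < 2*δ := by positivity
  have hkey : (R * (∑ i ∈ Finset.range n, osc g (Jcol δ i))
        + R * (∑ i ∈ Finset.range n, osc f (Jcol δ i)))/(2*δ)
      ≤ 6*R*(coverNum (G g) δ : ℝ) + 6*R*(coverNum (G f) δ : ℝ) := by
    rw [div_le_iff₀ h2δ]
    have e1 : R * (∑ i ∈ Finset.range n, osc g (Jcol δ i))
        ≤ R * (12 * δ * (coverNum (G g) δ : ℝ)) :=
      mul_le_mul_of_nonneg_left hsg (by linarith)
    have e2 : R * (∑ i ∈ Finset.range n, osc f (Jcol δ i))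
        ≤ R * (12 * δ * (coverNum (G f) δ : ℝ)) :=
      mul_le_mul_of_nonneg_left hsf (by linarith)
    nlinarith
  calc (coverNum (G (f*g)) δ : ℝ)
      ≤ (R * (∑ i ∈ Finset.range n, osc g (Jcol δ i))
          + R * (∑ i ∈ Finset.range n, osc f (Jcol δ i)))/(2*δ) + n := hsum
  _ ≤ (6*R*(coverNum (G g) δ : ℝ) + 6*R*(coverNum (G f) δ : ℝ)) + 6*(coverNum (G f) δ : ℝ) := by
      have := hnf
      linarith [hkey]
  _ ≤ (6*R+6) * ((coverNum (G f) δ : ℝ) + (coverNum (G g) δ : ℝ)) := by nlinarith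

lemma upperBoxDim_G_mul_le {f g : ℝ → ℝ} (hf : ContinuousOn f (Icc 0 1))
    (hg : ContinuousOn g (Icc 0 1)) :
    upperBoxDim (G (f*g)) ≤ max (upperBoxDim (G f)) (upperBoxDim (G g)) := by
  obtain ⟨Rf, hRf1, hRf⟩ := exists_fn_bound hf
  obtain ⟨Rg, hRg1, hRg⟩ := exists_fn_bound hg
  set R := max Rf Rg with hR
  have hR1 : 1 ≤ R := le_trans hRf1 (le_max_left _ _)
  have hRf' : ∀ x ∈ Icc (0:ℝ) 1, |f x| ≤ R := fun x hx => (hRf x hx).trans (le_max_left _ _)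
  have hRg' : ∀ x ∈ Icc (0:ℝ) 1, |g x| ≤ R := fun x hx => (hRg x hx).trans (le_max_right _ _)
  obtain ⟨Bf, hBf⟩ := eventually_hB hf
  obtain ⟨Bg, hBg⟩ := eventually_hB hg
  apply upperBoxDim_le_max_of_cover (G (f*g)) (G f) (G g) (6*R+6) 1 (max Bf Bg)
    (by linarith) le_rfl
  · filter_upwards [hBf, hBg] with δ h1 h2
    exact ⟨h1.trans (le_max_left _ _), h2.trans (le_max_right _ _)⟩
  · exact eventually_hpos hf hg
  · filter_upwards [eventually_product_cover hf hg hR1 hRf' hRg'] with δ h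
    simpa [div_one] using h

lemma upperBoxDim_G_inv_le {g : ℝ → ℝ} (hg : ContinuousOn g (Icc 0 1))
    (hgne : ∀ x ∈ Icc (0:ℝ) 1, g x ≠ 0) :
    upperBoxDim (G g⁻¹) ≤ upperBoxDim (G g) := by
  -- min of |g|
  obtain ⟨x₀, hx₀, hmin⟩ :=
    isCompact_Icc.exists_isMinOn (nonempty_Icc.mpr zero_le_one) hg.abs
  set m := |g x₀| with hm
  have hm0 : 0 < m := abs_pos.mpr (hgne x₀ hx₀)
  have hmle : ∀ x ∈ Icc (0:ℝ) 1, m ≤ |g x| := fun x hx => hmin hx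
  set L := max 1 (1/(m*m)) with hL
  have hL1 : (1:ℝ) ≤ L := le_max_left _ _
  have hL0 : (0:ℝ) ≤ L := by linarith
  have hc : (1:ℝ) ≤ 2*L := by linarith
  have hc0 : (0:ℝ) < 2*L := by linarith
  obtain ⟨B, hB⟩ := eventually_hB hg
  have key := upperBoxDim_le_max_of_cover (G g⁻¹) (G g) (G g) 1 (2*L) B le_rfl hc
    (hB.mono fun δ h => ⟨h, h⟩) (eventually_hpos hg hg) ?_
  · simpa [max_self] using key
  · filter_upwards [self_mem_nhdsWithin] with δ (hδ0 : 0 < δ)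
    have hδc : 0 < δ/(2*L) := by positivity
    have h := coverNum_image_le (G_compact hg) hL0 (inv_lipschitz_on_G hm0 hmle) hδc
    rw [show 2*L*(δ/(2*L)) = δ by field_simp, G_inv_eq] at h
    have hcast : (coverNum (G g⁻¹) δ : ℝ) ≤ (coverNum (G g) (δ/(2*L)) : ℝ) := by
      exact_mod_cast h
    have h0 : (0:ℝ) ≤ (coverNum (G g) (δ/(2*L)) : ℝ) := Nat.cast_nonneg _
    linarith

lemma G_congr {f h : ℝ → ℝ} (he : EqOn f h (Icc 0 1)) : G f = G h := by
  unfold G fnGraphOn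
  exact image_congr fun x hx => by rw [he hx]

lemma upperBoxDim_G_inv_eq {g : ℝ → ℝ} (hg : ContinuousOn g (Icc 0 1))
    (hgne : ∀ x ∈ Icc (0:ℝ) 1, g x ≠ 0) :
    upperBoxDim (G g⁻¹) = upperBoxDim (G g) := by
  refine le_antisymm (upperBoxDim_G_inv_le hg hgne) ?_
  have hginv : ContinuousOn (g⁻¹) (Icc 0 1) := hg.inv₀ hgne
  have hginvne : ∀ x ∈ Icc (0:ℝ) 1, g⁻¹ x ≠ 0 := fun x hx => inv_ne_zero (hgne x hx)
  have := upperBoxDim_G_inv_le hginv hginvne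
  rwa [show (g⁻¹)⁻¹ = g from funext fun x => inv_inv (g x)] at this


theorem upperBoxDim_graph_mul_eq (f g : ℝ → ℝ)
    (hf : ContinuousOn f (Set.Icc 0 1)) (hg : ContinuousOn g (Set.Icc 0 1))
    (hfne : ∀ x ∈ Set.Icc (0:ℝ) 1, f x ≠ 0) (hgne : ∀ x ∈ Set.Icc (0:ℝ) 1, g x ≠ 0)
    (hne : upperBoxDim (G f) ≠ upperBoxDim (G g)) :
    upperBoxDim (G (f * g)) = max (upperBoxDim (G f)) (upperBoxDim (G g)) := by
  -- main auxiliary: if dim G g < dim G f then dim G (f*g) = dim G f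
  have main : ∀ f g : ℝ → ℝ, ContinuousOn f (Set.Icc 0 1) → ContinuousOn g (Set.Icc 0 1) →
      (∀ x ∈ Set.Icc (0:ℝ) 1, g x ≠ 0) →
      upperBoxDim (G g) < upperBoxDim (G f) →
      upperBoxDim (G (f * g)) = upperBoxDim (G f) := by
    intro f g hf hg hgne hlt
    have hup : upperBoxDim (G (f*g)) ≤ upperBoxDim (G f) := by
      have := upperBoxDim_G_mul_le hf hg
      rwa [max_eq_left hlt.le] at this
    have hdown : upperBoxDim (G f) ≤ upperBoxDim (G (f*g)) := by
      have hfg : ContinuousOn (f*g) (Set.Icc 0 1) := hf.mul hg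
      have hginv : ContinuousOn (g⁻¹) (Set.Icc 0 1) := hg.inv₀ hgne
      have hGeq : G f = G ((f*g) * g⁻¹) := by
        apply G_congr
        intro x hx
        simp only [Pi.mul_apply, Pi.inv_apply]
        field_simp [hgne x hx]
      have h1 : upperBoxDim (G ((f*g) * g⁻¹))
          ≤ max (upperBoxDim (G (f*g))) (upperBoxDim (G g⁻¹)) :=
        upperBoxDim_G_mul_le hfg hginv
      rw [← hGeq, upperBoxDim_G_inv_eq hg hgne] at h1
      rcases max_cases (upperBoxDim (G (f*g))) (upperBoxDim (G g)) with ⟨he, -⟩ | ⟨he, -⟩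
      · rwa [he] at h1
      · rw [he] at h1; linarith
    linarith
  rcases lt_or_gt_of_ne hne with h | h
  · -- dim f < dim g : use commutativity
    have hcomm : f * g = g * f := mul_comm f g
    rw [hcomm, main g f hg hf hfne h, max_eq_right h.le]
  · rw [main f g hf hg hgne h, max_eq_left h.le]
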